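/- Let A be a commutative ring and m ≥ 1. Let H_m denote the m×m antidiagonal identity matrix and J := [[0, H_m],[−H_m, 0]] ∈ M_{2m}(A) (so J² = −I_{2m}). Let P := A[ỹ_{ij} (1 ≤ i,j ≤ 2m), x₁,…,x_{2m}], write Ỹ for the matrix (ỹ_{ij}) and x for the row (x₁,…,x_{2m}), and let I ⊆ P be the ideal generated by: all 2×2 minors of the (2m+1)×2m matrix obtained by stacking Ỹ on top of the row x; all entries of J·Ỹ + Ỹᵗ·J; and all entries of xᵗ·x + Ỹᵗ·J (where xᵗx has (i,j)-entry x_i x_j). Then the A-algebra P/I is isomorphic to the polynomial ring A[x₁,…,x_{2m}], via the map sending each x_i to x_i and the class of Ỹ to −J·xᵗ·x. In particular, P/I is a smooth A-algebra, isomorphic to the coordinate ring of affine (2m)-space over A. -/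

import Mathlib

open MvPolynomial Matrix

namespace Stmt8

variable (A : Type*) [CommRing A] (m : ℕ)

/-- The matrix `J = [[0, H_m], [−H_m, 0]]`, where `H_m` is the `m × m` antidiagonal identity:
`J i j = ±1` if `i + j = 2m − 1` (sign `+` for `i < m`, `−` for `i ≥ m`), and `0` otherwise. -/
def Jmat (R : Type*) [CommRing R] : Matrix (Fin (2 * m)) (Fin (2 * m)) R :=
  Matrix.of fun i j =>
    if (i : ℕ) + (j : ℕ) = 2 * m - 1 then (if (i : ℕ) < m then 1 else -1) else 0

/-- The polynomial ring `P = A[ỹ_{ij} (1 ≤ i,j ≤ 2m), x₁, …, x_{2m}]`. -/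
abbrev P := MvPolynomial ((Fin (2 * m) × Fin (2 * m)) ⊕ Fin (2 * m)) A

/-- The matrix of variables `Ỹ = (ỹ_{ij})`. -/
noncomputable def Yt : Matrix (Fin (2 * m)) (Fin (2 * m)) (P A m) :=
  Matrix.of fun i j => X (Sum.inl (i, j))

/-- The row of variables `x = (x₁, …, x_{2m})`. -/
noncomputable def x : Fin (2 * m) → P A m := fun i => X (Sum.inr i)

/-- The `(2m+1) × 2m` matrix obtained by stacking `Ỹ` on top of the row `x`. -/
noncomputable def stacked : Matrix (Fin (2 * m + 1)) (Fin (2 * m)) (P A m) :=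
  Matrix.of fun i j =>
    if h : (i : ℕ) < 2 * m then Yt A m ⟨(i : ℕ), h⟩ j else x A m j

/-- The matrix `xᵗ·x` with `(i,j)`-entry `x_i·x_j`. -/
noncomputable def xtx : Matrix (Fin (2 * m)) (Fin (2 * m)) (P A m) :=
  Matrix.of fun i j => x A m i * x A m j

/-- The ideal `I`, generated by: all `2 × 2` minors of the stacked matrix; all entries of
`J·Ỹ + Ỹᵀ·J`; and all entries of `xᵗ·x + Ỹᵀ·J`. -/
noncomputable def I : Ideal (P A m) :=
  Ideal.span
    ({r | ∃ (a b : Fin (2 * m + 1)) (c d : Fin (2 * m)),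
        r = stacked A m a c * stacked A m b d - stacked A m a d * stacked A m b c} ∪
      {r | ∃ i j : Fin (2 * m),
        r = (Jmat m (P A m) * Yt A m + (Yt A m)ᵀ * Jmat m (P A m)) i j} ∪
      {r | ∃ i j : Fin (2 * m),
        r = (xtx A m + (Yt A m)ᵀ * Jmat m (P A m)) i j})

/-- The matrix `−J·xᵗ·x` over the polynomial ring `A[x₁, …, x_{2m}]`. -/
noncomputable def targetY : Matrix (Fin (2 * m)) (Fin (2 * m)) (MvPolynomial (Fin (2 * m)) A) :=
  -(Jmat m (MvPolynomial (Fin (2 * m)) A) * Matrix.of fun i j => X i * X j)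

/-! ### Auxiliary lemmas -/

lemma Jmat_transpose (R : Type*) [CommRing R] : (Jmat m R)ᵀ = -(Jmat m R) := by
  ext i j
  have hi := i.isLt; have hj := j.isLt
  simp only [Jmat, transpose_apply, of_apply, Matrix.neg_apply]
  split_ifs <;> first | (exfalso; omega) | ring

lemma Jmat_sq (R : Type*) [CommRing R] : Jmat m R * Jmat m R = -1 := by
  ext i j
  have hi := i.isLt; have hj := j.isLt
  rw [mul_apply]
  rw [Finset.sum_eq_single (⟨2 * m - 1 - (i : ℕ), by omega⟩ : Fin (2 * m))]
  · have hv : ((⟨2 * m - 1 - (i : ℕ), by omega⟩ : Fin (2 * m)) : ℕ) = 2 * m - 1 - (i : ℕ) := rfl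
    by_cases hij : i = j
    · subst hij
      simp only [Jmat, of_apply, hv, Matrix.neg_apply, one_apply_eq]
      split_ifs <;> first | (exfalso; omega) | ring
    · have hij' : (i : ℕ) ≠ (j : ℕ) := fun h => hij (Fin.ext h)
      simp only [Jmat, of_apply, hv, Matrix.neg_apply, one_apply_ne hij]
      split_ifs <;> first | (exfalso; omega) | ring
  · intro b _ hb
    have hb' : (b : ℕ) ≠ 2 * m - 1 - (i : ℕ) := fun h => hb (Fin.ext h)
    simp only [Jmat, of_apply]
    rw [if_neg (by omega), zero_mul]
  · intro h; exact absurd (Finset.mem_univ _) h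

lemma Jmat_map {F R S : Type*} [CommRing R] [CommRing S] [FunLike F R S]
    [RingHomClass F R S] (f : F) (i j : Fin (2 * m)) :
    f (Jmat m R i j) = Jmat m S i j := by
  simp only [Jmat, of_apply]
  split_ifs <;> simp

/-- The transpose of `-(J·M)` for symmetric `M` is `M·J`. -/
lemma transpose_negJM {R : Type*} [CommRing R] (M : Matrix (Fin (2 * m)) (Fin (2 * m)) R)
    (hM : Mᵀ = M) : (-(Jmat m R * M))ᵀ = M * Jmat m R := by
  rw [transpose_neg, transpose_mul, hM, Jmat_transpose, Matrix.mul_neg, neg_neg]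

/-- Relation 2 holds for `Y = -(J·M)` with `M` symmetric. -/
lemma rel2 {R : Type*} [CommRing R] (M : Matrix (Fin (2 * m)) (Fin (2 * m)) R)
    (hM : Mᵀ = M) :
    Jmat m R * (-(Jmat m R * M)) + (-(Jmat m R * M))ᵀ * Jmat m R = 0 := by
  rw [transpose_negJM m M hM, Matrix.mul_neg, ← Matrix.mul_assoc, Jmat_sq,
    Matrix.mul_assoc, Jmat_sq, neg_one_mul, neg_neg, mul_neg_one, add_neg_cancel]

/-- Relation 3 holds for `Y = -(J·M)` with `M` symmetric. -/
lemma rel3 {R : Type*} [CommRing R] (M : Matrix (Fin (2 * m)) (Fin (2 * m)) R)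
    (hM : Mᵀ = M) : M + (-(Jmat m R * M))ᵀ * Jmat m R = 0 := by
  rw [transpose_negJM m M hM, Matrix.mul_assoc, Jmat_sq, mul_neg_one, add_neg_cancel]

/-- Abbreviation for `MvPolynomial (Fin (2 * m)) A`. -/
abbrev Q := MvPolynomial (Fin (2 * m)) A

/-- The matrix `xᵗ·x` over `Q`. -/
noncomputable def Mx : Matrix (Fin (2 * m)) (Fin (2 * m)) (Q A m) :=
  Matrix.of fun i j => X i * X j

lemma targetY_eq : targetY A m = -(Jmat m (Q A m) * Mx A m) := rfl

lemma Mx_transpose : (Mx A m)ᵀ = Mx A m := by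
  ext i j; simp [Mx, mul_comm]

/-- The algebra map `P → A[x]` sending `x_i ↦ X i` and `ỹ_{ij} ↦ (targetY)_{ij}`. -/
noncomputable def φ : P A m →ₐ[A] Q A m :=
  aeval (Sum.elim (fun p => targetY A m p.1 p.2) X)

lemma φ_Yt (i j : Fin (2 * m)) : φ A m (Yt A m i j) = targetY A m i j := by
  simp [φ, Yt]

lemma φ_x (i : Fin (2 * m)) : φ A m (x A m i) = X i := by
  simp [φ, x]

/-- The coefficients `c_a` so that `φ(stacked a j) = c_a · X j`. -/
noncomputable def cf : Fin (2 * m + 1) → Q A m := fun a =>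
  if h : (a : ℕ) < 2 * m then
    -(∑ k, Jmat m (Q A m) (⟨(a : ℕ), h⟩ : Fin (2 * m)) k * X k) else 1

lemma φ_stacked (a : Fin (2 * m + 1)) (j : Fin (2 * m)) :
    φ A m (stacked A m a j) = cf A m a * X j := by
  unfold stacked cf
  by_cases h : (a : ℕ) < 2 * m
  · simp only [of_apply, dif_pos h]
    rw [φ_Yt]
    simp only [targetY, Matrix.neg_apply, Matrix.mul_apply, Matrix.of_apply, neg_mul,
      Finset.sum_mul, mul_assoc]
  · simp only [of_apply, dif_neg h, φ_x, one_mul]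

lemma φ_entry2 (i j : Fin (2 * m)) :
    φ A m ((Jmat m (P A m) * Yt A m + (Yt A m)ᵀ * Jmat m (P A m)) i j) =
      (Jmat m (Q A m) * targetY A m + (targetY A m)ᵀ * Jmat m (Q A m)) i j := by
  simp only [Matrix.add_apply, Matrix.mul_apply, Matrix.transpose_apply, map_add, map_sum,
    _root_.map_mul, Jmat_map, φ_Yt]

lemma φ_entry3 (i j : Fin (2 * m)) :
    φ A m ((xtx A m + (Yt A m)ᵀ * Jmat m (P A m)) i j) =
      (Mx A m + (targetY A m)ᵀ * Jmat m (Q A m)) i j := by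
  simp only [Matrix.add_apply, Matrix.mul_apply, Matrix.transpose_apply, map_add, map_sum,
    _root_.map_mul, Jmat_map, φ_Yt, xtx, Mx, Matrix.of_apply, φ_x]

lemma I_le_ker : ∀ p ∈ I A m, φ A m p = 0 := by
  have : I A m ≤ RingHom.ker (φ A m) := by
    rw [I, Ideal.span_le]
    rintro r ((⟨a, b, c, d, rfl⟩ | ⟨i, j, rfl⟩) | ⟨i, j, rfl⟩) <;>
      rw [SetLike.mem_coe, RingHom.mem_ker]
    · simp only [map_sub, _root_.map_mul, φ_stacked]
      ring
    · rw [φ_entry2, targetY_eq, rel2 m (Mx A m) (Mx_transpose A m), Matrix.zero_apply]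
    · rw [φ_entry3, targetY_eq, rel3 m (Mx A m) (Mx_transpose A m), Matrix.zero_apply]
  exact fun p hp => this hp

/-- The key membership: `Ỹ + J·xᵗx ≡ 0 mod I`, entrywise. -/
lemma key_mem (i j : Fin (2 * m)) :
    (Yt A m + Jmat m (P A m) * xtx A m) i j ∈ I A m := by
  have hid : Yt A m + Jmat m (P A m) * xtx A m =
      Jmat m (P A m) * (xtx A m + (Yt A m)ᵀ * Jmat m (P A m)) -
        Jmat m (P A m) * (Jmat m (P A m) * Yt A m + (Yt A m)ᵀ * Jmat m (P A m)) := by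
    rw [Matrix.mul_add, Matrix.mul_add,
      ← Matrix.mul_assoc (Jmat m (P A m)) (Jmat m (P A m)) (Yt A m), Jmat_sq, neg_one_mul]
    abel
  rw [hid, Matrix.sub_apply, Matrix.mul_apply, Matrix.mul_apply]
  refine Ideal.sub_mem _
    (Ideal.sum_mem _ fun k _ => Ideal.mul_mem_left _ _ ?_)
    (Ideal.sum_mem _ fun k _ => Ideal.mul_mem_left _ _ ?_)
  · exact Ideal.subset_span (Or.inr ⟨k, j, rfl⟩)
  · exact Ideal.subset_span (Or.inl (Or.inr ⟨k, j, rfl⟩))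

lemma mk_Yt (i j : Fin (2 * m)) :
    Ideal.Quotient.mk (I A m) (Yt A m i j) =
      Ideal.Quotient.mk (I A m) ((-(Jmat m (P A m) * xtx A m)) i j) := by
  rw [Ideal.Quotient.eq]
  have : Yt A m i j - (-(Jmat m (P A m) * xtx A m)) i j =
      (Yt A m + Jmat m (P A m) * xtx A m) i j := by
    simp [sub_neg_eq_add]
  rw [this]
  exact key_mem A m i j

/-- The inverse algebra map `A[x] → P/I`. -/
noncomputable def ψ : Q A m →ₐ[A] P A m ⧸ I A m :=
  aeval fun i => Ideal.Quotient.mk (I A m) (x A m i)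

lemma ψ_targetY (i j : Fin (2 * m)) :
    ψ A m (targetY A m i j) =
      Ideal.Quotient.mk (I A m) ((-(Jmat m (P A m) * xtx A m)) i j) := by
  simp only [targetY, Matrix.neg_apply, Matrix.mul_apply, Matrix.of_apply, map_neg, map_sum,
    _root_.map_mul, Jmat_map, xtx, ψ, aeval_X, Matrix.of_apply]

/-- The lifted map `P/I → A[x]`. -/
noncomputable def φbar : (P A m ⧸ I A m) →ₐ[A] Q A m :=
  Ideal.Quotient.liftₐ (I A m) (φ A m) (I_le_ker A m)

lemma φbar_mk (p : P A m) :
    φbar A m (Ideal.Quotient.mk (I A m) p) = φ A m p := by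
  rw [φbar, Ideal.Quotient.liftₐ_apply]
  rfl

/-- The algebra isomorphism `P/I ≃ A[x]`. -/
lemma comp1 : (φbar A m).comp (ψ A m) = AlgHom.id A (Q A m) := by
  apply MvPolynomial.algHom_ext
  intro i
  simp [ψ, φbar_mk, φ_x]

lemma comp2 : (ψ A m).comp (φbar A m) = AlgHom.id A (P A m ⧸ I A m) := by
  apply Ideal.Quotient.algHom_ext
  apply MvPolynomial.algHom_ext
  rintro (⟨i, j⟩ | i)
  · have h1 : φ A m (X (Sum.inl (i, j))) = targetY A m i j := φ_Yt A m i j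
    simp only [AlgHom.comp_apply, Ideal.Quotient.mkₐ_eq_mk, φbar_mk, h1, ψ_targetY,
      AlgHom.coe_id, id_eq]
    exact (mk_Yt A m i j).symm
  · have h1 : φ A m (X (Sum.inr i)) = X i := φ_x A m i
    simp only [AlgHom.comp_apply, Ideal.Quotient.mkₐ_eq_mk, φbar_mk, h1, AlgHom.coe_id, id_eq]
    simp [ψ, x]

/-- The algebra isomorphism `P/I ≃ A[x]`. -/
noncomputable def e : (P A m ⧸ I A m) ≃ₐ[A] Q A m :=
  AlgEquiv.ofAlgHom (φbar A m) (ψ A m) (comp1 A m) (comp2 A m)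

lemma e_mk (p : P A m) :
    e A m (Ideal.Quotient.mk (I A m) p) = φ A m p := φbar_mk A m p

lemma e_x (i : Fin (2 * m)) :
    e A m (Ideal.Quotient.mk (I A m) (X (Sum.inr i))) = X i := by
  rw [e_mk]
  exact φ_x A m i

lemma e_Y (i j : Fin (2 * m)) :
    e A m (Ideal.Quotient.mk (I A m) (X (Sum.inl (i, j)))) = targetY A m i j := by
  rw [e_mk]
  exact φ_Yt A m i j

end Stmt8

/-- **the chart `U^fl_{m}` in the (R-P) case.**  Let `A` be a commutative ring
and `m ≥ 1`.  With `J = [[0, H_m], [−H_m, 0]]` (so `J² = −1`), `P = A[ỹ_{ij}, x_i]` and `I` the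
ideal generated by the `2 × 2` minors of the `(2m+1) × 2m` matrix stacking `Ỹ` over the row `x`,
the entries of `J·Ỹ + Ỹᵀ·J`, and the entries of `xᵗ·x + Ỹᵀ·J`, the `A`-algebra `P/I` is
isomorphic to the polynomial ring `A[x₁, …, x_{2m}]` via `x_i ↦ x_i`, `Ỹ ↦ −J·xᵗ·x`.
In particular `P/I` is a smooth `A`-algebra. -/
theorem stmt_8 (A : Type*) [CommRing A] (m : ℕ) (hm : 1 ≤ m) :
    (∃ e : (Stmt8.P A m ⧸ Stmt8.I A m) ≃ₐ[A] MvPolynomial (Fin (2 * m)) A,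
      (∀ i : Fin (2 * m),
        e (Ideal.Quotient.mk (Stmt8.I A m) (X (Sum.inr i))) = X i) ∧
      (∀ i j : Fin (2 * m),
        e (Ideal.Quotient.mk (Stmt8.I A m) (X (Sum.inl (i, j)))) = Stmt8.targetY A m i j)) ∧
    Algebra.Smooth A (Stmt8.P A m ⧸ Stmt8.I A m) := by
  constructor
  · exact ⟨Stmt8.e A m, Stmt8.e_x A m, Stmt8.e_Y A m⟩
  · haveI h1 : Algebra.FormallySmooth A (MvPolynomial (Fin (2 * m)) A) :=
      Algebra.FormallySmooth.of_equiv
        (MvPolynomial.renameEquiv A (Equiv.ulift.{u_1} (α := Fin (2 * m))))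
    haveI h2 : Algebra.FinitePresentation A (MvPolynomial (Fin (2 * m)) A) :=
      inferInstance
    haveI : Algebra.Smooth A (MvPolynomial (Fin (2 * m)) A) := ⟨h1, h2⟩
    exact Algebra.Smooth.of_equiv (Stmt8.e A m).symm
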